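/- For a pure state $\psi = |\psi\rangle\langle\psi|$ and a Hermitian operator $A$ on a finite-dimensional Hilbert space, the trace norm of the commutator satisfies $\|[A, \psi]\|_1 = 2\sqrt{V_\psi(A)}$, where $V_\psi(A) = \langle\psi|A^2|\psi\rangle - \langle\psi|A|\psi\rangle^2$. -/

import Mathlib

open Matrix
open scoped Kronecker ComplexOrder

variable {n m : Type*} [Fintype n] [DecidableEq n] [Fintype m] [DecidableEq m]

open Classical in
/-- square root of a matrix (zero if not PSD) -/
noncomputable def msqrt (A : Matrix n n ℂ) : Matrix n n ℂ :=
  if h : A.PosSemidef then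
    (h.1.eigenvectorUnitary : Matrix n n ℂ) *
      diagonal ((↑) ∘ (Real.sqrt ·) ∘ h.1.eigenvalues) * (star h.1.eigenvectorUnitary : Matrix n n ℂ)
  else 0

/-- trace norm -/
noncomputable def traceNorm (X : Matrix n m ℂ) : ℝ :=
  ((msqrt (Xᴴ * X)).trace).re

def IsDensity (ρ : Matrix n n ℂ) : Prop := ρ.PosSemidef ∧ ρ.trace = 1

noncomputable def variance (σ A : Matrix n n ℂ) : ℝ :=
  (Matrix.trace (σ * (A * A))).re - ((Matrix.trace (σ * A)).re) ^ 2

/-- `L` is a symmetric logarithmic derivative for `(σ, W)`. -/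
def IsSLD (σ W L : Matrix n n ℂ) : Prop :=
  L.IsHermitian ∧ L * σ + σ * L = ((-2 : ℂ) * Complex.I) • (W * σ - σ * W)

/-- SLD Fisher information value associated with a given SLD `L`. -/
noncomputable def fisherVal (σ L : Matrix n n ℂ) : ℝ :=
  (Matrix.trace (σ * (L * L))).re

noncomputable def fidelity (ρ σ : Matrix n n ℂ) : ℝ :=
  ((msqrt (msqrt ρ * σ * msqrt ρ)).trace).re

noncomputable def purifiedDist (ρ σ : Matrix n n ℂ) : ℝ :=
  Real.sqrt (1 - fidelity ρ σ ^ 2)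

/-- completely positive -/
def IsCompletelyPositive (Φ : Matrix n n ℂ →ₗ[ℂ] Matrix m m ℂ) : Prop :=
  ∀ (k : ℕ) (M : Matrix (Fin k × n) (Fin k × n) ℂ), M.PosSemidef →
    (Matrix.of fun (p q : Fin k × m) => (Φ (Matrix.of fun i j => M (p.1, i) (q.1, j))) p.2 q.2).PosSemidef

def IsCPTP (Φ : Matrix n n ℂ →ₗ[ℂ] Matrix m m ℂ) : Prop :=
  IsCompletelyPositive Φ ∧ ∀ X, (Φ X).trace = X.trace

/-- partial trace over the second factor -/
noncomputable def ptraceR {k r : Type*} [Fintype k] [Fintype r]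
    (M : Matrix (k × r) (k × r) ℂ) : Matrix k k ℂ :=
  Matrix.of fun i j => ∑ a : r, M (i, a) (j, a)


section helpers
set_option linter.unusedSectionVars false

lemma my_vmv_mul_vmv (x y z w : n → ℂ) :
    vecMulVec x y * vecMulVec z w = (y ⬝ᵥ z) • vecMulVec x w := by
  ext i j
  simp only [Matrix.mul_apply, vecMulVec_apply, Matrix.smul_apply, smul_eq_mul,
    dotProduct, Finset.sum_mul]
  exact Finset.sum_congr rfl fun k _ => by ring

lemma my_ct_vmv (x y : n → ℂ) : (vecMulVec x y)ᴴ = vecMulVec (star y) (star x) := by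
  ext i j
  simp [vecMulVec_apply, conjTranspose_apply, mul_comm]

lemma my_trace_vmv (x y : n → ℂ) : (vecMulVec x y).trace = x ⬝ᵥ y := by
  simp [Matrix.trace, Matrix.diag, vecMulVec_apply, dotProduct]

lemma my_mul_vmv (A : Matrix n n ℂ) (x y : n → ℂ) :
    A * vecMulVec x y = vecMulVec (A *ᵥ x) y := by
  ext i j
  simp only [Matrix.mul_apply, vecMulVec_apply, mulVec, dotProduct, Finset.sum_mul]
  exact Finset.sum_congr rfl fun k _ => by ring

lemma my_vmv_mul (A : Matrix n n ℂ) (hA : A.IsHermitian) (x y : n → ℂ) :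
    vecMulVec x (star y) * A = vecMulVec x (star (A *ᵥ y)) := by
  ext i j
  simp only [Matrix.mul_apply, vecMulVec_apply, Pi.star_apply, mulVec, dotProduct,
    star_sum, star_mul', Finset.mul_sum]
  refine Finset.sum_congr rfl fun k _ => ?_
  rw [hA.apply k j]
  ring

lemma my_star_dot (x y : n → ℂ) : star (star x ⬝ᵥ y) = star y ⬝ᵥ x := by
  simp only [dotProduct, star_sum, star_mul', star_star, Pi.star_apply]
  exact Finset.sum_congr rfl fun k _ => by ring

lemma my_psd_vmv (x : n → ℂ) : (vecMulVec x (star x)).PosSemidef := by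
  refine Matrix.PosSemidef.of_dotProduct_mulVec_nonneg ?_ ?_
  · show _ = _
    rw [my_ct_vmv, star_star]
  · intro y
    have h : star y ⬝ᵥ (vecMulVec x (star x)) *ᵥ y = star (star x ⬝ᵥ y) * (star x ⬝ᵥ y) := by
      simp only [dotProduct, mulVec, vecMulVec_apply, star_sum, star_mul', star_star,
        Pi.star_apply, Finset.sum_mul, Finset.mul_sum]
      rw [Finset.sum_comm]
      refine Finset.sum_congr rfl fun i _ => Finset.sum_congr rfl fun k _ => by ring
    rw [h]
    exact star_mul_self_nonneg _

lemma my_psd_smul {M : Matrix n n ℂ} (hM : M.PosSemidef) {r : ℝ} (hr : 0 ≤ r) :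
    ((r : ℂ) • M).PosSemidef := by
  refine Matrix.PosSemidef.of_dotProduct_mulVec_nonneg ?_ ?_
  · show _ = _
    rw [conjTranspose_smul, hM.1]
    congr 1
    simp [Complex.star_def]
  · intro x
    rw [smul_mulVec, dotProduct_smul, smul_eq_mul]
    exact mul_nonneg (by exact_mod_cast hr) (hM.dotProduct_mulVec_nonneg x)

open scoped MatrixOrder in
lemma my_msqrt_eq {A : Matrix n n ℂ} (hA : A.PosSemidef) : msqrt A = CFC.sqrt A := by
  rw [msqrt, dif_pos hA, CFC.sqrt_eq_cfc, cfc_nnreal_eq_real _ A, hA.1.cfc_eq]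
  simp only [IsHermitian.cfc, Unitary.conjStarAlgAut_apply]
  congr 3
  funext i
  simp [Real.coe_sqrt, Real.coe_toNNReal', max_eq_left (hA.eigenvalues_nonneg i)]

open scoped MatrixOrder in
lemma my_eq_msqrt {A S : Matrix n n ℂ} (hA : A.PosSemidef) (hS : S.PosSemidef) (h : S ^ 2 = A) :
    S = msqrt A := by
  rw [my_msqrt_eq hA]
  exact (CFC.sqrt_unique (by rw [← sq]; exact h) hS.nonneg).symm

end helpers


/-- For a pure state ψ, the trace norm of [A, ψ] equals twice the standard deviation of A. -/
theorem traceNorm_commutator_pure (ψ : n → ℂ) (hψ : star ψ ⬝ᵥ ψ = 1)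
    (A : Matrix n n ℂ) (hA : A.IsHermitian) :
    traceNorm (A * Matrix.vecMulVec ψ (star ψ) - Matrix.vecMulVec ψ (star ψ) * A) =
      2 * Real.sqrt (variance (Matrix.vecMulVec ψ (star ψ)) A) := by
  classical
  set P : Matrix n n ℂ := Matrix.vecMulVec ψ (star ψ) with hPdef
  set φ : n → ℂ := A *ᵥ ψ with hφdef
  set a : ℂ := star ψ ⬝ᵥ φ with hadef
  have ha : star a = a := by
    rw [hadef, my_star_dot, hφdef, star_mulVec, hA.eq, ← Matrix.dotProduct_mulVec]
  have haim : a.im = 0 := Complex.conj_eq_iff_im.mp ha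
  have hfφψ : star φ ⬝ᵥ ψ = a := by rw [← my_star_dot ψ φ, ← hadef, ha]
  set v : n → ℂ := φ - a • ψ with hvdef
  have hψv : star ψ ⬝ᵥ v = 0 := by
    rw [hvdef, dotProduct_sub, dotProduct_smul, hψ, ← hadef, smul_eq_mul, mul_one, sub_self]
  have hvψ : star v ⬝ᵥ ψ = 0 := by rw [← my_star_dot ψ v, hψv, star_zero]
  set V : ℂ := star v ⬝ᵥ v with hVdef
  have hV0 : 0 ≤ V := dotProduct_star_self_nonneg v
  have hVim : V.im = 0 := by
    have := (Complex.le_def.mp hV0).2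
    simpa using this.symm
  have hVrenn : 0 ≤ V.re := by simpa using (Complex.le_def.mp hV0).1
  have hVre : ((V.re : ℝ) : ℂ) = V := Complex.ext (by simp) (by simp [hVim])
  have hsv : star v = star φ - star a • star ψ := by
    ext i; simp [hvdef]
  have hVexp : V = star φ ⬝ᵥ φ - a * a := by
    rw [hVdef, hsv, sub_dotProduct, dotProduct_sub, dotProduct_sub, smul_dotProduct,
      smul_dotProduct, dotProduct_smul, dotProduct_smul, hψ, hfφψ, ← hadef, ha]
    simp only [smul_eq_mul]
    ring
  -- variance
  have hPA : P * A = vecMulVec ψ (star φ) := by rw [hPdef, my_vmv_mul A hA, hφdef]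
  have htrPA : (P * A).trace = a := by
    rw [hPA, my_trace_vmv, dotProduct_comm, hfφψ]
  have htrPAA : (P * (A * A)).trace = star φ ⬝ᵥ φ := by
    rw [← mul_assoc, hPA, my_vmv_mul A hA, my_trace_vmv, dotProduct_comm, star_mulVec,
      hA.eq, ← Matrix.dotProduct_mulVec, ← hφdef]
  have hvar : variance P A = V.re := by
    rw [variance, htrPA, htrPAA, hVexp]
    simp [Complex.mul_re, haim, pow_two]
  -- the commutator
  have hX : A * P - P * A = vecMulVec φ (star ψ) - vecMulVec ψ (star φ) := by
    rw [hPdef, my_mul_vmv, my_vmv_mul A hA, hφdef]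
  have hvv : vecMulVec v (star v) = vecMulVec φ (star φ) - a • vecMulVec φ (star ψ)
      - a • vecMulVec ψ (star φ) + (a * a) • vecMulVec ψ (star ψ) := by
    have hsa : (starRingEnd ℂ) a = a := ha
    ext i j
    simp only [hvdef, hsv, vecMulVec_apply, Pi.sub_apply, Pi.smul_apply, Matrix.sub_apply,
      Matrix.add_apply, Matrix.smul_apply, smul_eq_mul, Pi.star_apply, Complex.star_def, map_add, map_neg, map_sub, map_mul, hsa]
    ring
  have hXHX : (A * P - P * A)ᴴ * (A * P - P * A)
      = vecMulVec v (star v) + V • P := by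
    rw [hX, conjTranspose_sub, my_ct_vmv, my_ct_vmv, star_star, star_star,
      sub_mul, mul_sub, mul_sub, my_vmv_mul_vmv, my_vmv_mul_vmv, my_vmv_mul_vmv,
      my_vmv_mul_vmv, hfφψ, ← hadef, hψ, hvv, hVexp, hPdef]
    module
  have hPSDX : ((A * P - P * A)ᴴ * (A * P - P * A)).PosSemidef :=
    Matrix.posSemidef_conjTranspose_mul_self _
  by_cases hv : v = 0
  · -- degenerate case: zero variance
    have hV0' : V = 0 := by rw [hVdef, hv]; simp
    have hXHX0 : (A * P - P * A)ᴴ * (A * P - P * A) = 0 := by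
      rw [hXHX, hv, hV0', zero_smul, add_zero]
      ext i j; simp [vecMulVec_apply]
    have hsq : msqrt (0 : Matrix n n ℂ) = 0 :=
      (my_eq_msqrt Matrix.PosSemidef.zero Matrix.PosSemidef.zero (by simp [pow_two])).symm
    rw [traceNorm, hvar, hV0']
    have : msqrt ((A * P - P * A)ᴴ * (A * P - P * A)) = 0 :=
      (my_eq_msqrt hPSDX Matrix.PosSemidef.zero (by rw [hXHX0]; simp [pow_two])).symm
    rw [this]
    simp
  · -- nondegenerate case
    have hVne : V ≠ 0 := fun h => hv (dotProduct_star_self_eq_zero.mp (hVdef ▸ h))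
    have hVrepos : 0 < V.re := by
      rcases lt_or_eq_of_le hVrenn with h | h
      · exact h
      · exfalso; exact hVne (by rw [← hVre, ← h]; simp)
    set c : ℝ := Real.sqrt V.re with hcdef
    have hcpos : 0 < c := Real.sqrt_pos.mpr hVrepos
    have hc2 : c * c = V.re := Real.mul_self_sqrt hVrenn
    set S : Matrix n n ℂ := ((c⁻¹ : ℝ) : ℂ) • vecMulVec v (star v) + ((c : ℝ) : ℂ) • P
      with hSdef
    have hSpsd : S.PosSemidef :=
      (my_psd_smul (my_psd_vmv v) (inv_nonneg.mpr hcpos.le)).add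
        (my_psd_smul (hPdef ▸ my_psd_vmv ψ) hcpos.le)
    have e1 : vecMulVec v (star v) * vecMulVec v (star v) = V • vecMulVec v (star v) := by
      rw [my_vmv_mul_vmv, ← hVdef]
    have e2 : vecMulVec v (star v) * P = 0 := by
      rw [hPdef, my_vmv_mul_vmv, hvψ, zero_smul]
    have e3 : P * vecMulVec v (star v) = 0 := by
      rw [hPdef, my_vmv_mul_vmv, hψv, zero_smul]
    have e4 : P * P = P := by rw [hPdef, my_vmv_mul_vmv, hψ, one_smul]
    have hco1 : ((c⁻¹ : ℝ) : ℂ) * ((c⁻¹ : ℝ) : ℂ) * V = 1 := by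
      rw [← hVre]
      push_cast
      rw [← hc2]
      field_simp
      exact Complex.ofReal_pow c 2
    have hco2 : ((c : ℝ) : ℂ) * ((c : ℝ) : ℂ) = V := by
      rw [← hVre, ← hc2]; push_cast; ring
    have hS2 : S ^ 2 = (A * P - P * A)ᴴ * (A * P - P * A) := by
      rw [pow_two, hXHX, hSdef, add_mul, mul_add, mul_add, smul_mul_assoc, smul_mul_assoc,
        smul_mul_assoc, smul_mul_assoc, mul_smul_comm, mul_smul_comm, mul_smul_comm,
        mul_smul_comm, e1, e2, e3, e4, smul_zero, smul_zero, smul_smul, smul_smul,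
        smul_smul, hco1, one_smul, hco2]
      simp
    have hSeq : S = msqrt ((A * P - P * A)ᴴ * (A * P - P * A)) := my_eq_msqrt hPSDX hSpsd hS2
    rw [traceNorm]
    rw [← hSeq, hSdef]
    rw [trace_add, trace_smul, trace_smul, my_trace_vmv, hPdef, my_trace_vmv,
      dotProduct_comm, ← hVdef, dotProduct_comm, hψ]
    rw [← hVre, hvar]
    have hre : (((c⁻¹ : ℝ) : ℂ) • ((V.re : ℝ) : ℂ) + ((c : ℝ) : ℂ) • (1 : ℂ)).re
        = c⁻¹ * V.re + c := by
      simp [smul_eq_mul, Complex.add_re, Complex.mul_re]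
    rw [hre, ← hc2, Real.sqrt_mul_self hcpos.le]
    field_simp
    ring
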